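/- Let M be a finite nonempty subset of F_q and let g(x) ∈ F_q[x] be a monic polynomial of degree d ≥ 1 such that for each a ∈ M the set g^{-1}(a) = {b ∈ F_q : g(b) = a} has exactly d elements. Let S = ∪_{a ∈ M} g^{-1}(a). Then for every b ∈ S, with a = g(b) ∈ M, one has Δ_S(b) = Δ_M(a) · g′(b), where g′ is the formal derivative of g. -/

import Mathlib

open Finset Polynomial

/-- Δ_S(a) = ∏_{b ∈ S, b ≠ a} (a − b). -/
def deltaS {F : Type*} [Field F] [DecidableEq F] (S : Finset F) (a : F) : F :=
  ∏ b ∈ S.erase a, (a - b)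

theorem stmt_5 {F : Type*} [Field F] [Fintype F] [DecidableEq F]
    (M : Finset F) (hM : M.Nonempty)
    (g : Polynomial F) (d : ℕ) (hd : 1 ≤ d) (hmonic : g.Monic) (hdeg : g.natDegree = d)
    (hfib : ∀ a ∈ M, (Finset.univ.filter fun b : F => g.eval b = a).card = d)
    (S : Finset F) (hS : S = M.biUnion fun a => Finset.univ.filter fun b : F => g.eval b = a) :
    ∀ b ∈ S, deltaS S b = deltaS M (g.eval b) * (Polynomial.derivative g).eval b := by
  subst hS
  set fib : F → Finset F := fun a => Finset.univ.filter fun b : F => g.eval b = a with hfibdef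
  have hg0 : g.natDegree ≠ 0 := by omega
  -- key factorization
  have hkey : ∀ a ∈ M, g - C a = ∏ c ∈ fib a, (X - C c) := by
    intro a ha
    have hdegp : (g - C a).natDegree = d := by
      rw [natDegree_sub_C, hdeg]
    have hmp : (g - C a).Monic :=
      hmonic.sub_of_left (lt_of_le_of_lt (degree_C_le) (by
        rw [degree_eq_natDegree hmonic.ne_zero, hdeg]
        exact_mod_cast Nat.zero_lt_of_lt hd |>.trans_le (le_refl _) |>.trans_le (le_refl _)))
    have hne : g - C a ≠ 0 := hmp.ne_zero
    have hle : (fib a).val ≤ (g - C a).roots := by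
      rw [Multiset.le_iff_subset (fib a).nodup]
      intro c hc
      rw [mem_roots hne]
      simp only [hfibdef, Finset.mem_val, Finset.mem_filter] at hc
      simp [IsRoot, hc.2]
    have hdvd : (∏ c ∈ fib a, (X - C c)) ∣ g - C a := by
      have := (Multiset.prod_X_sub_C_dvd_iff_le_roots hne (fib a).val).2 hle
      rw [Finset.prod_eq_multiset_prod]
      exact this
    refine eq_of_monic_of_dvd_of_natDegree_le (monic_prod_of_monic _ _ fun c _ => monic_X_sub_C c) hmp hdvd ?_
    rw [hdegp, natDegree_prod_of_monic _ _ fun c _ => monic_X_sub_C c]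
    simp [hfib a ha]
    exact (hfib a ha).ge
  intro b hb
  simp only [Finset.mem_biUnion, Finset.mem_filter, Finset.mem_univ, true_and] at hb
  obtain ⟨a, haM, hba⟩ := hb
  have hba' : g.eval b = a := by
    simpa [hfibdef] using hba
  rw [hba']
  -- product over a fiber of a' ≠ a
  have hfprod : ∀ a' ∈ M, a' ≠ a → ∏ c ∈ fib a', (b - c) = a - a' := by
    intro a' ha' _
    have := congrArg (Polynomial.eval b) (hkey a' ha')
    simpa [eval_prod, hba'] using this.symm
  -- derivative at b
  have hbfib : b ∈ fib a := hba
  have hderiv : ∏ c ∈ (fib a).erase b, (b - c) = (Polynomial.derivative g).eval b := by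
    have h1 : Polynomial.derivative (g - C a) = Polynomial.derivative g := by
      simp
    have h2 := congrArg Polynomial.derivative (hkey a haM)
    rw [h1] at h2
    have h3 : (∏ c ∈ fib a, (X - C c)) = (Multiset.map (fun c => X - C c) (fib a).val).prod := rfl
    rw [h3] at h2
    have h4 := Polynomial.eval_multiset_prod_X_sub_C_derivative (S := (fib a).val) (r := b)
      (by simpa using hbfib)
    rw [← h2] at h4
    rw [h4]
    rw [← Finset.erase_val]
    rfl
  -- decompose S.erase b
  have hdisj : ∀ a1 ∈ M, ∀ a2 ∈ M, a1 ≠ a2 → Disjoint (fib a1) (fib a2) := by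
    intro a1 _ a2 _ h12
    simp only [Finset.disjoint_left, hfibdef, Finset.mem_filter, Finset.mem_univ, true_and]
    rintro c h1 h2
    exact h12 (h1 ▸ h2 ▸ rfl)
  have hsplit : (M.biUnion fib).erase b =
      ((fib a).erase b) ∪ ((M.erase a).biUnion fib) := by
    ext c
    simp only [Finset.mem_erase, Finset.mem_biUnion, Finset.mem_union, hfibdef,
      Finset.mem_filter, Finset.mem_univ, true_and]
    constructor
    · rintro ⟨hcb, a', ha', hc⟩
      by_cases h : a' = a
      · exact Or.inl ⟨hcb, h ▸ hc⟩
      · exact Or.inr ⟨a', ⟨h, ha'⟩, hc⟩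
    · rintro (⟨hcb, hc⟩ | ⟨a', ⟨h, ha'⟩, hc⟩)
      · exact ⟨hcb, a, haM, hc⟩
      · refine ⟨?_, a', ha', hc⟩
        rintro rfl
        exact h (hc.symm.trans hba')
  have hdisj2 : Disjoint ((fib a).erase b) ((M.erase a).biUnion fib) := by
    refine Finset.disjoint_left.2 ?_
    intro c hc1 hc2
    simp only [Finset.mem_erase, Finset.mem_biUnion, hfibdef, Finset.mem_filter,
      Finset.mem_univ, true_and] at hc1 hc2
    obtain ⟨a', ⟨h, _⟩, hc'⟩ := hc2
    exact h (hc'.symm.trans hc1.2)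
  rw [deltaS, hsplit, Finset.prod_union hdisj2, hderiv,
    Finset.prod_biUnion (fun a1 h1 a2 h2 h12 =>
      hdisj a1 (Finset.mem_of_mem_erase h1) a2 (Finset.mem_of_mem_erase h2) h12)]
  rw [Finset.prod_congr rfl fun a' ha' =>
    hfprod a' (Finset.mem_of_mem_erase ha') (Finset.ne_of_mem_erase ha')]
  rw [deltaS, mul_comm]
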